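/- Let 0 < β < 1, θ ≥ 0, δ > 0, ρ > 0 and set φ := (1−β+θ)/(1−β) and δ* := δφ. Suppose μ, h : ℝ → ℝ are differentiable with h(t) > 0 for all t, u : ℝ → ℝ is any function, h'(t) = δ(1−u(t))h(t) and μ'(t) = μ(t)(ρ−δ) − (μ(t)θδ/(1−β))·u(t) for all t. Then the function μ*(t) := μ(t)·φ^{−1}·h(t)^{1−φ} satisfies (μ*)'(t) = μ*(t)(ρ−δ*) for all t. -/

import Mathlib

/-- Hiraguchi's transformation for the costate variable: if h' = δ(1-u)h and
μ' = μ(ρ-δ) - (μθδ/(1-β))u, then μ* := μ·φ⁻¹·h^{1-φ} satisfies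
(μ*)' = μ*(ρ-δ*) with δ* = δφ, φ = (1-β+θ)/(1-β). -/
theorem mustar_deriv (β θ δ ρ : ℝ)
    (hβ0 : 0 < β) (hβ1 : β < 1) (hθ : 0 ≤ θ) (hδ : 0 < δ) (hρ : 0 < ρ)
    (φ δs : ℝ) (hφ : φ = (1 - β + θ) / (1 - β)) (hδs : δs = δ * φ)
    (μ h u : ℝ → ℝ) (hpos : ∀ t, 0 < h t)
    (hderh : ∀ t, HasDerivAt h (δ * (1 - u t) * h t) t)
    (hderμ : ∀ t, HasDerivAt μ (μ t * (ρ - δ) - μ t * θ * δ / (1 - β) * u t) t) :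
    ∀ t, HasDerivAt (fun s => μ s * φ⁻¹ * h s ^ (1 - φ))
      ((μ t * φ⁻¹ * h t ^ (1 - φ)) * (ρ - δs)) t := by
  intro t
  have hb : (0:ℝ) < 1 - β := by linarith
  have hne : h t ≠ 0 := (hpos t).ne'
  have hφpos : 0 < φ := by
    rw [hφ]; positivity
  have hθeq : θ * δ / (1 - β) = (φ - 1) * δ := by
    rw [hφ]; field_simp; ring
  have hμ' : μ t * (ρ - δ) - μ t * θ * δ / (1 - β) * u t
      = μ t * (ρ - δ) - μ t * ((φ - 1) * δ) * u t := by
    rw [← hθeq]; ring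
  have d1 := ((hμ' ▸ hderμ t).mul_const φ⁻¹).mul
    ((hderh t).rpow_const (p := 1 - φ) (Or.inl hne))
  convert d1 using 1
  · rfl
  · rfl
  · rfl
  rw [show (1:ℝ) - φ = (1 - φ - 1) + 1 by ring, Real.rpow_add_one hne]
  have hφne : φ ≠ 0 := hφpos.ne'
  subst hδs
  field_simp
  ring
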